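/- arXiv:1609.01358 — 2 statements merged into one kernel-verified Lean document; each statement's English description precedes it below -/
import Mathlib

section
/- (Collatz–Wielandt formula, lower part) For a nonnegative irreducible square matrix A with Perron eigenvalue ρ(A), for every strictly positive vector x, min_i (Ax)_i / x_i ≤ ρ(A), with equality attained when x is the positive Perron eigenvector; hence sup over positive x of min_i (Ax)_i/x_i equals ρ(A). -/
open Matrix

/-- A matrix with nonnegative entries is irreducible if some positive power
connects any two indices with a positive entry. -/
def MatrixIrreducible {n : ℕ} (A : Matrix (Fin n) (Fin n) ℝ) : Prop :=
  ∀ i j, ∃ k : ℕ, 0 < (A ^ (k + 1)) i j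

/-- Collatz–Wielandt formula, lower part: the Perron eigenvalue `ρ` is the
greatest value of `min_i (Ax)_i / x_i` over strictly positive vectors `x`. -/
theorem collatz_wielandt_lower {n : ℕ} (hn : 0 < n)
    (A : Matrix (Fin n) (Fin n) ℝ) (ρ : ℝ) (g : Fin n → ℝ)
    (hA : ∀ i j, 0 ≤ A i j) (hirr : MatrixIrreducible A)
    (hg : ∀ i, 0 < g i) (heig : A.mulVec g = ρ • g) :
    IsGreatest
      {r : ℝ | ∃ x : Fin n → ℝ, (∀ i, 0 < x i) ∧ r = ⨅ i, A.mulVec x i / x i}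
      ρ := by
  haveI : Nonempty (Fin n) := ⟨⟨0, hn⟩⟩
  constructor
  · refine ⟨g, hg, ?_⟩
    have h : (fun i => A.mulVec g i / g i) = fun _ : Fin n => ρ := by
      funext i
      rw [heig]
      simp only [Pi.smul_apply, smul_eq_mul]
      exact mul_div_cancel_right₀ ρ (hg i).ne'
    rw [h, ciInf_const]
  · rintro r ⟨x, hx, rfl⟩
    obtain ⟨i0, hi0⟩ := Finite.exists_max (fun i => x i / g i)
    set t := x i0 / g i0 with ht_def
    have ht : 0 < t := div_pos (hx i0) (hg i0)
    have hxle : ∀ j, x j ≤ t * g j := by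
      intro j
      have := (div_le_iff₀ (hg j)).mp (hi0 j)
      linarith [this]
    have hAx : A.mulVec x i0 ≤ t * A.mulVec g i0 := by
      simp only [mulVec, dotProduct]
      rw [Finset.mul_sum]
      apply Finset.sum_le_sum
      intro j _
      calc A i0 j * x j ≤ A i0 j * (t * g j) :=
            mul_le_mul_of_nonneg_left (hxle j) (hA i0 j)
        _ = t * (A i0 j * g j) := by ring
    have htg : t * g i0 = x i0 := div_mul_cancel₀ _ (hg i0).ne'
    have hkey : A.mulVec x i0 ≤ ρ * x i0 := by
      have : A.mulVec g i0 = ρ * g i0 := by rw [heig]; simp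
      calc A.mulVec x i0 ≤ t * A.mulVec g i0 := hAx
        _ = ρ * (t * g i0) := by rw [this]; ring
        _ = ρ * x i0 := by rw [htg]
    calc (⨅ i, A.mulVec x i / x i) ≤ A.mulVec x i0 / x i0 :=
          ciInf_le (Set.finite_range _).bddBelow i0
      _ ≤ ρ := (div_le_iff₀ (hx i0)).mpr (by linarith [hkey])
end

section
/- (Collatz–Wielandt formula, upper part) For a nonnegative irreducible square matrix A with Perron eigenvalue ρ(A), the infimum over strictly positive vectors x of max_i (Ax)_i / x_i equals ρ(A). -/
open Matrix

/-- Collatz–Wielandt formula, upper part: the Perron eigenvalue `ρ` is the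
least value of `max_i (Ax)_i / x_i` over strictly positive vectors `x`. -/
theorem collatz_wielandt_upper {n : ℕ} (hn : 0 < n)
    (A : Matrix (Fin n) (Fin n) ℝ) (ρ : ℝ) (g : Fin n → ℝ)
    (hA : ∀ i j, 0 ≤ A i j) (hirr : MatrixIrreducible A)
    (hg : ∀ i, 0 < g i) (heig : A.mulVec g = ρ • g) :
    IsLeast
      {r : ℝ | ∃ x : Fin n → ℝ, (∀ i, 0 < x i) ∧ r = ⨆ i, A.mulVec x i / x i}
      ρ := by 
  haveI : NeZero n := ⟨hn.ne'⟩
  have i0 : Fin n := ⟨0, hn⟩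
  -- monotonicity of mulVec
  have hmono : ∀ u v : Fin n → ℝ, (∀ i, u i ≤ v i) → ∀ i, A.mulVec u i ≤ A.mulVec v i := by
    intro u v huv i
    simp only [Matrix.mulVec, dotProduct]
    exact Finset.sum_le_sum fun j _ => mul_le_mul_of_nonneg_left (huv j) (hA i j)
  -- powers have nonneg entries
  have hpow : ∀ k (i j : Fin n), 0 ≤ (A ^ k) i j := by
    intro k
    induction k with
    | zero => intro i j; rw [pow_zero, Matrix.one_apply]; split <;> norm_num
    | succ k ih =>
      intro i j
      rw [pow_succ, Matrix.mul_apply]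
      exact Finset.sum_nonneg fun l _ => mul_nonneg (ih i l) (hA l j)
  -- powers applied to eigenvector
  have hpowg : ∀ k, (A ^ k).mulVec g = ρ ^ k • g := by
    intro k
    induction k with
    | zero => simp
    | succ k ih =>
      rw [pow_succ', ← Matrix.mulVec_mulVec, ih, Matrix.mulVec_smul, heig, smul_smul, ← pow_succ]
  -- ρ ≥ 0
  have hρ0 : 0 ≤ ρ := by
    have h1 : 0 ≤ A.mulVec g i0 := by
      simp only [Matrix.mulVec, dotProduct]
      exact Finset.sum_nonneg fun j _ => mul_nonneg (hA i0 j) (hg j).le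
    rw [heig] at h1
    simp only [Pi.smul_apply, smul_eq_mul] at h1
    nlinarith [hg i0]
  -- ρ > 0 via irreducibility
  have hρ : 0 < ρ := by
    obtain ⟨k, hk⟩ := hirr i0 i0
    have h1 : 0 < (A ^ (k + 1)).mulVec g i0 := by
      have : (A ^ (k + 1)) i0 i0 * g i0 ≤ (A ^ (k + 1)).mulVec g i0 := by
        simp only [Matrix.mulVec, dotProduct]
        exact Finset.single_le_sum (f := fun j => (A ^ (k + 1)) i0 j * g j)
          (fun j _ => mul_nonneg (hpow _ i0 j) (hg j).le) (Finset.mem_univ i0)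
      nlinarith [hg i0]
    rw [hpowg] at h1
    simp only [Pi.smul_apply, smul_eq_mul] at h1
    have h2 : 0 < ρ ^ (k + 1) := by nlinarith [hg i0]
    rcases hρ0.lt_or_eq with h | h
    · exact h
    · rw [← h] at h2; simp at h2
  constructor
  · -- membership
    refine ⟨g, hg, ?_⟩
    rw [heig]
    have : ∀ i : Fin n, (ρ • g) i / g i = ρ := by
      intro i
      simp [smul_eq_mul, mul_div_assoc, div_self (hg i).ne']
    simp only [this, ciSup_const]
  · -- lower bound
    rintro r ⟨x, hx, rfl⟩
    set r := ⨆ i, A.mulVec x i / x i with hrdef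
    have hbdd : BddAbove (Set.range fun i => A.mulVec x i / x i) :=
      Set.Finite.bddAbove (Set.finite_range _)
    have hle : ∀ i, A.mulVec x i ≤ r * x i := by
      intro i
      have := le_ciSup hbdd i
      exact (div_le_iff₀ (hx i)).1 this
    have hr0 : 0 ≤ r := by
      have h1 : 0 ≤ A.mulVec x i0 / x i0 := by
        apply div_nonneg _ (hx i0).le
        simp only [Matrix.mulVec, dotProduct]
        exact Finset.sum_nonneg fun j _ => mul_nonneg (hA i0 j) (hx j).le
      exact h1.trans (le_ciSup hbdd i0)
    -- c such that c • g ≤ x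
    set c := Finset.univ.inf' Finset.univ_nonempty (fun i => x i / g i) with hcdef
    have hc : 0 < c := by
      rw [hcdef, Finset.lt_inf'_iff]
      exact fun i _ => div_pos (hx i) (hg i)
    have hcg : ∀ i, c * g i ≤ x i := by
      intro i
      have h1 : c ≤ x i / g i := Finset.inf'_le _ (Finset.mem_univ i)
      calc c * g i ≤ (x i / g i) * g i := mul_le_mul_of_nonneg_right h1 (hg i).le
        _ = x i := div_mul_cancel₀ _ (hg i).ne'
    -- upper iterate bound
    have H1 : ∀ k i, (A ^ k).mulVec x i ≤ r ^ k * x i := by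
      intro k
      induction k with
      | zero => intro i; simp
      | succ k ih =>
        intro i
        rw [pow_succ', ← Matrix.mulVec_mulVec]
        calc A.mulVec ((A ^ k).mulVec x) i ≤ A.mulVec (fun j => r ^ k * x j) i :=
              hmono _ _ ih i
          _ = r ^ k * A.mulVec x i := by
              have : (fun j => r ^ k * x j) = r ^ k • x := rfl
              rw [this, Matrix.mulVec_smul]; rfl
          _ ≤ r ^ k * (r * x i) := mul_le_mul_of_nonneg_left (hle i) (pow_nonneg hr0 k)
          _ = r ^ (k + 1) * x i := by ring
    -- lower iterate bound
    have H2 : ∀ k i, ρ ^ k * (c * g i) ≤ (A ^ k).mulVec x i := by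
      intro k
      induction k with
      | zero => intro i; simpa using hcg i
      | succ k ih =>
        intro i
        rw [show A ^ (k + 1) = A * A ^ k from pow_succ' A k, ← Matrix.mulVec_mulVec]
        calc ρ ^ (k + 1) * (c * g i) = ρ ^ k * c * (ρ * g i) := by ring
          _ = ρ ^ k * c * A.mulVec g i := by rw [heig]; rfl
          _ = A.mulVec (fun j => ρ ^ k * (c * g j)) i := by
              have : (fun j => ρ ^ k * (c * g j)) = (ρ ^ k * c) • g := by
                funext j; simp only [Pi.smul_apply, smul_eq_mul]; ring
              rw [this, Matrix.mulVec_smul]; simp only [Pi.smul_apply, smul_eq_mul]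
          _ ≤ A.mulVec ((A ^ k).mulVec x) i := hmono _ _ ih i
    -- conclude
    by_contra hcon
    push_neg at hcon  -- r < ρ
    have key : ∀ k, ρ ^ k * (c * g i0) ≤ r ^ k * x i0 :=
      fun k => (H2 k i0).trans (H1 k i0)
    have hrpos : 0 < r := by
      have h1 := key 1
      simp only [pow_one] at h1
      nlinarith [hg i0, hx i0, mul_pos hc (hg i0)]
    have h1lt : 1 < ρ / r := (one_lt_div hrpos).2 hcon
    obtain ⟨k, hk⟩ := (tendsto_pow_atTop_atTop_of_one_lt h1lt).eventually_gt_atTop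
      (x i0 / (c * g i0)) |>.exists
    have hcgpos : 0 < c * g i0 := mul_pos hc (hg i0)
    have h2 : (ρ / r) ^ k ≤ x i0 / (c * g i0) := by
      rw [div_pow, div_le_div_iff₀ (pow_pos hrpos k) hcgpos]
      nlinarith [key k]
    exact absurd h2 (not_le.2 hk)
end
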